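/- The torsion tensor T² of the second natural connection satisfies the identity (*): T²(x,y,z) + T²(y,z,x) + T²(φx,y,φz) + T²(y,φz,φx) − η(x)(T²(ξ,y,z) + T²(y,z,ξ) − η(y)T²(ξ,z,ξ)) − η(y)(T²(x,ξ,z) + T²(ξ,z,x) + T²(φx,ξ,φz) + T²(ξ,φz,φx)) − η(z)(T²(x,y,ξ) + T²(y,ξ,x) − η(y)T²(x,ξ,ξ)) = 0 for all x, y, z ∈ V. -/
import Mathlib


open scoped RealInnerProductSpace

noncomputable section

variable {V : Type*} [NormedAddCommGroup V] [InnerProductSpace ℝ V]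

/-- A Riemannian Π-structure on a real inner product space `V`:
a linear map `phi`, a vector `xi` (with dual form `η x = ⟪x, xi⟫`) satisfying
the defining algebraic identities. -/
structure PiStruct (V : Type*) [NormedAddCommGroup V] [InnerProductSpace ℝ V] where
  phi : V →ₗ[ℝ] V
  xi : V
  phi_xi : phi xi = 0
  phi_phi : ∀ x : V, phi (phi x) = x - (⟪x, xi⟫ : ℝ) • xi
  eta_phi : ∀ x : V, ⟪phi x, xi⟫ = 0
  eta_xi : ⟪xi, xi⟫ = (1 : ℝ)
  g_phi_phi : ∀ x y : V, ⟪phi x, phi y⟫ = ⟪x, y⟫ - ⟪x, xi⟫ * ⟪y, xi⟫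
  g_phi_symm : ∀ x y : V, ⟪phi x, y⟫ = ⟪x, phi y⟫

/-- Trilinear real-valued maps on `V`. -/
abbrev Tri (V : Type*) [NormedAddCommGroup V] [InnerProductSpace ℝ V] :=
  V →ₗ[ℝ] V →ₗ[ℝ] V →ₗ[ℝ] ℝ

/-- The 1-form `η(x) = g(x, ξ)`. -/
def PiStruct.eta (P : PiStruct V) (x : V) : ℝ := ⟪x, P.xi⟫

/-- `F` is a fundamental tensor for the Π-structure `P`. -/
def IsFund (P : PiStruct V) (F : Tri V) : Prop :=
  (∀ x y z : V, F x y z = F x z y) ∧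
  (∀ x y z : V, F x y z =
    -F x (P.phi y) (P.phi z) + P.eta y * F x P.xi z + P.eta z * F x y P.xi)

/-- The Nijenhuis tensor of `F`. -/
def Nij (P : PiStruct V) (F : Tri V) (x y z : V) : ℝ :=
  F (P.phi x) y z - F (P.phi y) x z - F x y (P.phi z) + F y x (P.phi z)
    + P.eta z * (F x (P.phi y) P.xi - F y (P.phi x) P.xi)

/-- The potential of the first natural connection. -/
def Q1 (P : PiStruct V) (F : Tri V) (x y z : V) : ℝ :=
  -(1/2) * F x (P.phi y) z - (1/2) * P.eta z * F x (P.phi y) P.xi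
    + P.eta y * F x (P.phi z) P.xi

/-- The potential of the second natural connection. -/
def Q2 (P : PiStruct V) (F : Tri V) (x y z : V) : ℝ :=
  Q1 P F x y z - (1/8) * (Nij P F (P.phi (P.phi z)) (P.phi (P.phi y)) (P.phi (P.phi x))
    + 2 * P.eta x * Nij P F (P.phi z) (P.phi y) P.xi)

/-- The torsion tensor of the first natural connection. -/
def T1 (P : PiStruct V) (F : Tri V) (x y z : V) : ℝ :=
  -(1/2) * (F x (P.phi y) z - F y (P.phi x) z)
    - (1/2) * P.eta z * (F x (P.phi y) P.xi - F y (P.phi x) P.xi)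
    + P.eta y * F x (P.phi z) P.xi - P.eta x * F y (P.phi z) P.xi

/-- The torsion tensor of the second natural connection. -/
def T2 (P : PiStruct V) (F : Tri V) (x y z : V) : ℝ :=
  Q2 P F x y z - Q2 P F y x z

/-- Identity (*) for a torsion-like tensor `T`. -/
def StarId (P : PiStruct V) (T : V → V → V → ℝ) : Prop :=
  ∀ x y z : V,
    T x y z + T y z x + T (P.phi x) y (P.phi z) + T y (P.phi z) (P.phi x)
    - P.eta x * (T P.xi y z + T y z P.xi - P.eta y * T P.xi z P.xi)
    - P.eta y * (T x P.xi z + T P.xi z x + T (P.phi x) P.xi (P.phi z)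
        + T P.xi (P.phi z) (P.phi x))
    - P.eta z * (T x y P.xi + T y P.xi x - P.eta y * T x P.xi P.xi) = 0


lemma lxi (P : PiStruct V) (F : Tri V) (hF : IsFund P F) (a : V) :
    F a P.xi P.xi = 0 := by
  have h := hF.2 a P.xi P.xi
  simp only [PiStruct.eta, P.phi_xi, map_zero, LinearMap.zero_apply, P.eta_xi, one_mul,
    neg_zero, zero_add] at h
  linarith

lemma l1 (P : PiStruct V) (F : Tri V) (hF : IsFund P F) (a b c : V) :
    F a (P.phi b) (P.phi c) = -F a b c + ⟪b, P.xi⟫ * F a P.xi c + ⟪c, P.xi⟫ * F a b P.xi := by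
  have h := hF.2 a b c
  simp only [PiStruct.eta] at h
  linear_combination h

lemma l2 (P : PiStruct V) (F : Tri V) (hF : IsFund P F) (a b c : V) :
    F a (P.phi b) c = -F a b (P.phi c) + ⟪b, P.xi⟫ * F a (P.phi c) P.xi
      + ⟪c, P.xi⟫ * F a (P.phi b) P.xi := by
  have h := hF.2 a (P.phi b) c
  rw [P.phi_phi b] at h
  simp only [PiStruct.eta, map_sub, map_smul, LinearMap.sub_apply, LinearMap.smul_apply,
    smul_eq_mul, P.eta_phi, zero_mul, zero_add] at h
  linear_combination h + ⟪b, P.xi⟫ * (hF.1 a P.xi (P.phi c))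

set_option maxHeartbeats 4000000 in
/-- the torsion tensor `T²` of the second natural connection satisfies
identity (*). -/
theorem T2_satisfies_star_identity
    [FiniteDimensional ℝ V] (n : ℕ) (hn : 1 ≤ n)
    (hdim : Module.finrank ℝ V = 2 * n + 1)
    (P : PiStruct V) (F : Tri V) (hF : IsFund P F) :
    StarId P (T2 P F) := by
  intro x y z
  simp only [T2, Q2, Q1, Nij, PiStruct.eta, P.phi_phi, P.phi_xi, P.eta_phi, P.eta_xi,
    map_sub, map_smul, map_zero, LinearMap.sub_apply, LinearMap.smul_apply,
    LinearMap.zero_apply, smul_eq_mul, inner_sub_left, real_inner_smul_left,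
    inner_zero_left, mul_zero, zero_mul, mul_one, one_mul, add_zero, zero_add,
    sub_zero, neg_zero, zero_sub, sub_self, zero_smul, smul_zero]
  linear_combination
      ((-1/2 : ℝ)) * (l2 P F hF x y z)
      + ((1/8 : ℝ)) * (hF.1 (P.phi y) z x)
      + ((-1/8 : ℝ) * ⟪z, P.xi⟫) * (hF.1 (P.phi y) P.xi x)
      + ((-5/8 : ℝ)) * (hF.1 y z (P.phi x))
      + ((5/8 : ℝ) * ⟪z, P.xi⟫) * (hF.1 y P.xi (P.phi x))
      + ((5/8 : ℝ) * ⟪y, P.xi⟫) * (hF.1 P.xi z (P.phi x))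
      + ((-1/4 : ℝ) * ⟪x, P.xi⟫) * (hF.1 (P.phi z) P.xi y)
      + ((-1/4 : ℝ)) * (hF.1 (P.phi x) z y)
      + ((1/4 : ℝ) * ⟪z, P.xi⟫) * (hF.1 (P.phi x) P.xi y)
      + ((-1/4 : ℝ) * ⟪y, P.xi⟫ * ⟪z, P.xi⟫) * (lxi P F hF (P.phi x))
      + ((1/4 : ℝ) * ⟪x, P.xi⟫) * (hF.1 z P.xi (P.phi y))
      + ((1/4 : ℝ)) * (hF.1 x z (P.phi y))
      + ((-1/4 : ℝ) * ⟪z, P.xi⟫) * (hF.1 x P.xi (P.phi y))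
      + ((-1/4 : ℝ) * ⟪x, P.xi⟫) * (hF.1 P.xi z (P.phi y))
      + ((-5/8 : ℝ)) * (l2 P F hF y z x)
      + ((1/4 : ℝ) * ⟪x, P.xi⟫ * ⟪y, P.xi⟫) * (lxi P F hF (P.phi z))
      + ((1/2 : ℝ)) * (l2 P F hF z y x)
      + ((1/8 : ℝ) * ⟪x, P.xi⟫) * (hF.1 (P.phi y) P.xi z)
      + ((-5/8 : ℝ) * ⟪x, P.xi⟫) * (hF.1 y P.xi (P.phi z))
      + ((-1/2 : ℝ)) * (l1 P F hF (P.phi x) y z)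
      + ((-5/8 : ℝ) * ⟪y, P.xi⟫ * ⟪z, P.xi⟫) * (hF.1 P.xi P.xi (P.phi x))
      + ((1/8 : ℝ)) * (l1 P F hF (P.phi y) z x)
      + ((5/8 : ℝ) * ⟪y, P.xi⟫) * (l2 P F hF P.xi z x)
      + ((1/4 : ℝ)) * (l2 P F hF z x y)
      + ((-1/4 : ℝ) * ⟪z, P.xi⟫) * (l2 P F hF P.xi x y)
      + ((-1/4 : ℝ)) * (l2 P F hF x z y)
      + ((1/4 : ℝ) * ⟪x, P.xi⟫) * (l2 P F hF P.xi z y)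
      + ((-1/4 : ℝ)) * (l1 P F hF (P.phi z) x y)
      + ((1/4 : ℝ)) * (l1 P F hF (P.phi x) z y)
      + ((1/2 : ℝ)) * (l1 P F hF (P.phi z) y x)
      + ((5/8 : ℝ) * ⟪x, P.xi⟫ * ⟪y, P.xi⟫) * (hF.1 P.xi P.xi (P.phi z))
      + ((-1/8 : ℝ)) * (l1 P F hF (P.phi y) x z)
      + ((1/4 : ℝ) * ⟪x, P.xi⟫) * (l2 P F hF P.xi y z)
      + ((-1/2 : ℝ) * ⟪z, P.xi⟫) * (l2 P F hF P.xi y x)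
      + ((1/4 : ℝ)) * (l2 P F hF x y z)
      + ((5/8 : ℝ)) * (hF.1 y z (P.phi x))
      + ((-1/2 : ℝ)) * (hF.1 z y (P.phi x))
      + ((-1/2 : ℝ) * ⟪y, P.xi⟫) * (hF.1 (P.phi x) P.xi z)
      + ((-1/8 : ℝ)) * (hF.1 (P.phi y) z x)
      + ((1/8 : ℝ) * ⟪z, P.xi⟫) * (hF.1 (P.phi y) P.xi x)
      + ((-5/8 : ℝ) * ⟪y, P.xi⟫) * (hF.1 P.xi z (P.phi x))
      + ((1/4 : ℝ)) * (hF.1 x z (P.phi y))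
      + ((-1/4 : ℝ) * ⟪x, P.xi⟫) * (hF.1 P.xi z (P.phi y))
      + ((-1/4 : ℝ) * ⟪x, P.xi⟫) * (hF.1 (P.phi z) P.xi y)
      + ((-1/4 : ℝ)) * (hF.1 (P.phi x) z y)
      + ((1/4 : ℝ) * ⟪z, P.xi⟫) * (hF.1 (P.phi x) P.xi y)
      + ((-1/2 : ℝ)) * (hF.1 (P.phi z) y x)
      + ((1/2 : ℝ) * ⟪y, P.xi⟫) * (hF.1 (P.phi z) P.xi x)
      + ((-1/8 : ℝ) * ⟪x, P.xi⟫) * (hF.1 (P.phi y) P.xi z)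
      + ((1/2 : ℝ) * ⟪z, P.xi⟫) * (hF.1 P.xi y (P.phi x))
      + ((5/8 : ℝ)) * (l2 P F hF y x z)
      + ((-1/2 : ℝ)) * (l2 P F hF z x y)
      + ((-5/8 : ℝ) * ⟪y, P.xi⟫) * (l2 P F hF P.xi x z)
      + ((1/4 : ℝ)) * (l2 P F hF x y z)
      + ((-1/4 : ℝ) * ⟪x, P.xi⟫) * (l2 P F hF P.xi y z)
      + ((1/2 : ℝ) * ⟪z, P.xi⟫) * (l2 P F hF P.xi x y)
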